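/- Path-construction lemma (core of the proofs of Theorems 3.1, 4.1 and 8.1): let B : List Bool → Bool, define Sec as below, and let g : List Bool → Bool satisfy: for all s : List Bool and n : ℕ, if Sec n (s ++ [g s]) then Sec n (s ++ [!(g s)]). Define δ : ℕ → Bool recursively by δ n = g (δ↾n). Then for every n, if B (δ↾n) = true then Sec n []. Consequently, if the empty list is not n-secured by B for any n, then δ is an infinite path avoiding B entirely. -/
import Mathlib


/-- The first `n` values of `γ` as a list. -/
def seg (γ : ℕ → Bool) (n : ℕ) : List Bool := List.ofFn fun i : Fin n => γ i

/-- `Sec B n s`: the finite sequence `s` is `n`-secured by the bar `B`. -/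
def Sec (B : List Bool → Bool) : ℕ → List Bool → Prop
  | 0, s => ∃ n ≤ s.length, B (s.take n) = true
  | k + 1, s => Sec B k (s ++ [false]) ∧ Sec B k (s ++ [true])

lemma seg_succ (γ : ℕ → Bool) (n : ℕ) : seg γ (n + 1) = seg γ n ++ [γ n] := by
  rw [seg, List.ofFn_succ', List.concat_eq_append]
  rfl

lemma sec_step (B : List Bool → Bool) (g : List Bool → Bool)
    (hg : ∀ (s : List Bool) (n : ℕ), Sec B n (s ++ [g s]) → Sec B n (s ++ [!(g s)]))
    (s : List Bool) (k : ℕ) (h : Sec B k (s ++ [g s])) : Sec B (k + 1) s := by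
  have h' := hg s k h
  constructor <;> cases hgs : g s <;> simp_all [Sec]

/-- Path-construction lemma (core of the proofs of Theorems 3.1, 4.1 and 8.1). -/
theorem path_construction (B : List Bool → Bool) (g : List Bool → Bool)
    (hg : ∀ (s : List Bool) (n : ℕ), Sec B n (s ++ [g s]) → Sec B n (s ++ [!(g s)]))
    (δ : ℕ → Bool) (hδ : ∀ n, δ n = g (seg δ n)) :
    (∀ n, B (seg δ n) = true → Sec B n []) ∧
      ((∀ m, ¬ Sec B m []) → ∀ n, B (seg δ n) = false) := by
  have step : ∀ k m, Sec B k (seg δ (m + 1)) → Sec B (k + 1) (seg δ m) := by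
    intro k m h
    apply sec_step B g hg
    rw [← hδ m, ← seg_succ]
    exact h
  have key : ∀ n, B (seg δ n) = true → Sec B n [] := by
    intro n hB
    have base : Sec B 0 (seg δ n) := by
      refine ⟨n, ?_, ?_⟩
      · simp [seg]
      · rw [List.take_of_length_le (by simp [seg])]; exact hB
    have main : ∀ j, j ≤ n → Sec B j (seg δ (n - j)) := by
      intro j
      induction j with
      | zero => intro _; simpa using base
      | succ j ih =>
        intro hj
        have h1 : n - j = (n - (j + 1)) + 1 := by omega
        have := ih (by omega)
        rw [h1] at this
        exact step j _ this
    have := main n le_rfl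
    simpa [seg] using this
  exact ⟨key, fun hns n => by
    cases hB : B (seg δ n) with
    | false => rfl
    | true => exact absurd (key n hB) (hns n)⟩
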